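/- Let d ≥ 1, κ ≥ 1, γ ∈ (0,2), and ℓ : (0,∞) → (0,∞) with ∫_r^∞ ℓ(s)/s ds =: L(r) < ∞ for r > 0 and ℓ(rλ) ≥ c_L λ^{-γ} ℓ(r) for r > 0, λ ≥ 1. Suppose k : ℝ^d \ {0} → [0,∞) satisfies κ^{-1}|h|^{-d}ℓ(|h|) ≤ k(h) ≤ κ|h|^{-d}ℓ(|h|) for all h ≠ 0, and k(h) = k(−h). Let ψ(ξ) = ∫_{ℝ^d\{0}} (1 − cos⟨ξ,h⟩) k(h) dh. Then there is a constant c > 0 (depending on d, κ, c_L, γ) such that ψ(ξ) ≤ c L(1/|ξ|) for all ξ ≠ 0. -/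

import Mathlib

open MeasureTheory Set
open scoped RealInnerProductSpace

section AuxStmt16
open MeasureTheory.Measure Metric
open scoped ENNReal

lemma lintegral_fun_norm_addHaar' {E : Type*} [NormedAddCommGroup E] [NormedSpace ℝ E]
    [MeasurableSpace E] [BorelSpace E] [FiniteDimensional ℝ E] [Nontrivial E]
    (μ : Measure E) [μ.IsAddHaarMeasure] (H : ℝ → ℝ≥0∞) (hH : Measurable H) :
    ∫⁻ x, H ‖x‖ ∂μ = μ.toSphere univ *
      ∫⁻ r in Ioi (0:ℝ), ENNReal.ofReal (r ^ (Module.finrank ℝ E - 1)) * H r := by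
  have h0 : MeasurableSet ({0}ᶜ : Set E) := (measurableSet_singleton 0).compl
  calc ∫⁻ x, H ‖x‖ ∂μ = ∫⁻ x in {0}ᶜ, H ‖x‖ ∂μ := by
        rw [MeasureTheory.restrict_compl_singleton (0:E)]
    _ = ∫⁻ x : ({0}ᶜ : Set E), H ‖x.1‖ ∂(μ.comap (↑)) := (lintegral_subtype_comap h0 _).symm
    _ = ∫⁻ p : sphere (0:E) 1 × Ioi (0:ℝ), H p.2
        ∂(μ.toSphere.prod (.volumeIoiPow (Module.finrank ℝ E - 1))) := by
        rw [← μ.measurePreserving_homeomorphUnitSphereProd.lintegral_comp_emb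
          (Homeomorph.measurableEmbedding _) (fun p => H p.2)]
        simp
    _ = μ.toSphere univ * ∫⁻ r : Ioi (0:ℝ), H r ∂(Measure.volumeIoiPow (Module.finrank ℝ E - 1)) := by
        rw [lintegral_prod _ (by fun_prop :
          Measurable fun p : ↑(sphere (0:E) 1) × ↑(Ioi (0:ℝ)) => H ↑p.2).aemeasurable]
        simp [lintegral_const, mul_comm]
    _ = μ.toSphere univ * ∫⁻ r in Ioi (0:ℝ),
        ENNReal.ofReal (r ^ (Module.finrank ℝ E - 1)) * H r := by
        congr 1
        rw [Measure.volumeIoiPow, lintegral_withDensity_eq_lintegral_mul _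
          ((measurable_subtype_coe.pow_const _).ennreal_ofReal)
          (by fun_prop : Measurable fun r : ↑(Ioi (0:ℝ)) => H ↑r)]
        simp only [Pi.mul_apply]
        exact lintegral_subtype_comap measurableSet_Ioi
          (fun r => ENNReal.ofReal (r ^ (Module.finrank ℝ E - 1)) * H r)

lemma integrable_fun_norm_addHaar' {E : Type*} [NormedAddCommGroup E] [NormedSpace ℝ E]
    [MeasurableSpace E] [BorelSpace E] [FiniteDimensional ℝ E] [Nontrivial E]
    (μ : Measure E) [μ.IsAddHaarMeasure] {G : ℝ → ℝ} (hG : Measurable G)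
    (hint : IntegrableOn (fun r => r ^ (Module.finrank ℝ E - 1) * G r) (Ioi 0) volume) :
    Integrable (fun x => G ‖x‖) μ := by
  refine ⟨(hG.comp measurable_norm).aestronglyMeasurable, ?_⟩
  rw [hasFiniteIntegral_iff_norm]
  have : (fun x : E => ENNReal.ofReal ‖G ‖x‖‖) = fun x : E => (fun r => ENNReal.ofReal ‖G r‖) ‖x‖ := rfl
  rw [this, lintegral_fun_norm_addHaar' μ _ hG.norm.ennreal_ofReal]
  refine ENNReal.mul_lt_top (measure_lt_top _ _) ?_
  have heq : ∀ r ∈ Ioi (0:ℝ), ENNReal.ofReal (r ^ (Module.finrank ℝ E - 1)) * ENNReal.ofReal ‖G r‖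
      = ENNReal.ofReal ‖r ^ (Module.finrank ℝ E - 1) * G r‖ := by
    intro r hr
    rw [← ENNReal.ofReal_mul (pow_nonneg (le_of_lt (mem_Ioi.mp hr)) _), norm_mul, norm_pow, Real.norm_of_nonneg (le_of_lt (mem_Ioi.mp hr))]
  rw [setLIntegral_congr_fun measurableSet_Ioi heq]
  exact (hasFiniteIntegral_iff_norm _).mp hint.2

lemma radial_aux (κ : ℝ) (hκ : 1 ≤ κ) (ℓ : ℝ → ℝ) (cL γ : ℝ)
    (hcL : cL ∈ Set.Ioo (0:ℝ) 1) (hγ : γ ∈ Set.Ioo (0:ℝ) 2)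
    (hℓmeas : Measurable ℓ) (hℓpos : ∀ r > 0, 0 < ℓ r)
    (hscale : ∀ r > 0, ∀ lam ≥ (1:ℝ), ℓ (r * lam) ≥ cL * lam ^ (-γ) * ℓ r)
    (L : ℝ → ℝ) (hL : ∀ r > 0, L r = ∫ s in Set.Ioi r, ℓ s / s)
    (hfin : ∀ r > 0, IntegrableOn (fun s => ℓ s / s) (Set.Ioi r))
    (b : ℝ) (hb : 0 < b) :
    IntegrableOn (fun r => κ * (min (b^2*r^2/2) 2 * (ℓ r / r))) (Ioi 0) ∧
    ∫ r in Ioi (0:ℝ), κ * (min (b^2*r^2/2) 2 * (ℓ r / r)) ≤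
      (κ*cL⁻¹*γ*cL⁻¹/(2*(2-γ)) + 2*κ) * L (1/b) := by
  obtain ⟨hcL0, hcL1⟩ := hcL
  obtain ⟨hγ0, hγ2⟩ := hγ
  have hκ0 : 0 < κ := lt_of_lt_of_le one_pos hκ
  set R : ℝ := 1/b with hRdef
  have hR : 0 < R := by positivity
  set F : ℝ → ℝ := fun r => κ * (min (b^2*r^2/2) 2 * (ℓ r / r)) with hF
  -- upper scaling bound on (0, R]
  have hup : ∀ r ∈ Ioc (0:ℝ) R, r * ℓ r ≤ cL⁻¹ * ℓ R * R^γ * r^(1-γ) := by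
    intro r hr
    have hr0 : 0 < r := hr.1
    have h1 := hscale r hr0 (R/r) (by rw [ge_iff_le, le_div_iff₀ hr0]; linarith [hr.2])
    rw [show r * (R/r) = R by field_simp] at h1
    have hA : (0:ℝ) < r ^ γ := Real.rpow_pos_of_pos hr0 _
    have hB : (0:ℝ) < R ^ γ := Real.rpow_pos_of_pos hR _
    have hpow : (R/r)^(-γ) = r^γ / R^γ := by
      rw [Real.rpow_neg (by positivity), Real.div_rpow hR.le hr0.le, inv_div]
    rw [hpow] at h1
    have hr1γ : r^(1-γ) = r * (r^γ)⁻¹ := by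
      rw [Real.rpow_sub hr0, Real.rpow_one, div_eq_mul_inv]
    have hl0 : 0 < ℓ r := hℓpos r hr0
    calc r * ℓ r = (cL⁻¹ * R^γ * (r^γ)⁻¹ * r) * (cL * (r^γ / R^γ) * ℓ r) := by
          field_simp
        _ ≤ (cL⁻¹ * R^γ * (r^γ)⁻¹ * r) * ℓ R := by
          apply mul_le_mul_of_nonneg_left h1 (by positivity)
        _ = cL⁻¹ * ℓ R * R^γ * r^(1-γ) := by rw [hr1γ]; ring
  -- lower scaling bound on (R, ∞)
  have hlow : ∀ s ∈ Ioi R, cL * ℓ R * R^γ * s^(-γ-1) ≤ ℓ s / s := by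
    intro s hs
    have hs0 : 0 < s := lt_trans hR hs
    have h1 := hscale R hR (s/R) (by rw [ge_iff_le, le_div_iff₀ hR]; linarith [mem_Ioi.mp hs])
    rw [show R * (s/R) = s by field_simp] at h1
    have hpow : (s/R)^(-γ) = R^γ / s^γ := by
      rw [Real.rpow_neg (by positivity), Real.div_rpow hs0.le hR.le, inv_div]
    rw [hpow] at h1
    have h2 : cL * (R^γ / s^γ) * ℓ R / s ≤ ℓ s / s := by gcongr
    have hse : cL * ℓ R * R^γ * s^(-γ-1) = cL * (R^γ / s^γ) * ℓ R / s := by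
      rw [show -γ-1 = -γ + (-1) by ring, Real.rpow_add hs0, Real.rpow_neg_one,
        Real.rpow_neg hs0.le]
      field_simp
    rw [hse]; exact h2
  -- ℓ R ≤ γ/cL * L R
  have hℓL : ℓ R ≤ γ * cL⁻¹ * L R := by
    have hmint : IntegrableOn (fun s : ℝ => cL * ℓ R * R^γ * s^(-γ-1)) (Ioi R) :=
      (integrableOn_Ioi_rpow_of_lt (by linarith) hR).const_mul _
    have hmono : ∫ s in Ioi R, cL * ℓ R * R^γ * s^(-γ-1) ≤ ∫ s in Ioi R, ℓ s / s :=
      setIntegral_mono_on hmint (hfin R hR) measurableSet_Ioi hlow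
    rw [integral_const_mul, integral_Ioi_rpow_of_lt (by linarith) hR] at hmono
    rw [← hL R hR] at hmono
    have hRγ : R^γ * R^(-γ) = 1 := by
      rw [← Real.rpow_add hR]; simp
    have hRe : -R ^ (-γ - 1 + 1) / (-γ - 1 + 1) = R^(-γ) / γ := by
      rw [show -γ-1+1 = -γ by ring]; field_simp
    rw [hRe] at hmono
    have hthis : cL * ℓ R / γ ≤ L R := by
      calc cL * ℓ R / γ = cL * ℓ R * (R^γ * R^(-γ)) / γ := by rw [hRγ]; ring
        _ = cL * ℓ R * R^γ * (R^(-γ)/γ) := by ring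
        _ ≤ L R := hmono
    have h3 : cL * ℓ R ≤ γ * L R := by
      rw [div_le_iff₀ hγ0] at hthis; linarith
    calc ℓ R = cL⁻¹ * (cL * ℓ R) := by field_simp
      _ ≤ cL⁻¹ * (γ * L R) := mul_le_mul_of_nonneg_left h3 (by positivity)
      _ = γ * cL⁻¹ * L R := by ring
  -- nonnegativity of F on Ioi 0
  have hFnn : ∀ r ∈ Ioi (0:ℝ), 0 ≤ F r := by
    intro r hr
    have hr0 : 0 < r := hr
    exact mul_nonneg hκ0.le (mul_nonneg (le_min (by positivity) (by norm_num))
      (div_nonneg (hℓpos r hr0).le hr0.le))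
  have hFmeas : Measurable F := by fun_prop
  -- majorant on (0, R]
  set C1 : ℝ := κ * (b^2/2) * (cL⁻¹ * ℓ R * R^γ) with hC1
  have hB1 : ∀ r ∈ Ioc (0:ℝ) R, F r ≤ C1 * r^(1-γ) := by
    intro r hr
    have hr0 : 0 < r := hr.1
    have hl0 : 0 < ℓ r := hℓpos r hr0
    have step1 : F r ≤ κ * ((b^2*r^2/2) * (ℓ r / r)) := by
      apply mul_le_mul_of_nonneg_left _ hκ0.le
      exact mul_le_mul_of_nonneg_right (min_le_left _ _) (div_nonneg hl0.le hr0.le)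
    have step2 : κ * ((b^2*r^2/2) * (ℓ r / r)) = κ * (b^2/2) * (r * ℓ r) := by
      field_simp
    calc F r ≤ κ * (b^2/2) * (r * ℓ r) := by rw [← step2]; exact step1
      _ ≤ κ * (b^2/2) * (cL⁻¹ * ℓ R * R^γ * r^(1-γ)) :=
        mul_le_mul_of_nonneg_left (hup r hr) (by positivity)
      _ = C1 * r^(1-γ) := by rw [hC1]; ring
  have hg1int : IntegrableOn (fun r : ℝ => C1 * r^(1-γ)) (Ioc 0 R) := by
    have := (intervalIntegral.intervalIntegrable_rpow' (r := 1-γ) (by linarith)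
      (a := 0) (b := R))
    rw [intervalIntegrable_iff_integrableOn_Ioc_of_le hR.le] at this
    exact this.const_mul _
  have hInt1 : IntegrableOn F (Ioc 0 R) := by
    apply Integrable.mono' hg1int (hFmeas.aestronglyMeasurable.restrict)
    filter_upwards [ae_restrict_mem measurableSet_Ioc] with r hr
    rw [Real.norm_of_nonneg (hFnn r hr.1)]
    exact hB1 r hr
  -- majorant on (R, ∞)
  have hg2int : IntegrableOn (fun r : ℝ => 2*κ*(ℓ r / r)) (Ioi R) :=
    (hfin R hR).const_mul _
  have hB2 : ∀ r ∈ Ioi R, F r ≤ 2*κ*(ℓ r / r) := by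
    intro r hr
    have hr0 : 0 < r := lt_trans hR hr
    have hl0 : 0 < ℓ r := hℓpos r hr0
    calc F r ≤ κ * (2 * (ℓ r / r)) := by
          apply mul_le_mul_of_nonneg_left _ hκ0.le
          exact mul_le_mul_of_nonneg_right (min_le_right _ _) (div_nonneg hl0.le hr0.le)
      _ = 2*κ*(ℓ r / r) := by ring
  have hInt2 : IntegrableOn F (Ioi R) := by
    apply Integrable.mono' hg2int (hFmeas.aestronglyMeasurable.restrict)
    filter_upwards [ae_restrict_mem measurableSet_Ioi] with r hr
    rw [Real.norm_of_nonneg (hFnn r (lt_trans hR hr))]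
    exact hB2 r hr
  have hIF : IntegrableOn F (Ioi 0) := by
    rw [← Ioc_union_Ioi_eq_Ioi hR.le]
    exact hInt1.union hInt2
  refine ⟨hIF, ?_⟩
  have hsplit : ∫ r in Ioi (0:ℝ), F r = (∫ r in Ioc (0:ℝ) R, F r) + ∫ r in Ioi R, F r := by
    rw [← setIntegral_union (Ioc_disjoint_Ioi le_rfl) measurableSet_Ioi hInt1 hInt2,
      Ioc_union_Ioi_eq_Ioi hR.le]
  -- bound the first piece
  have hE1 : ∫ r in Ioc (0:ℝ) R, F r ≤ κ*cL⁻¹*γ*cL⁻¹/(2*(2-γ)) * L R := by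
    have h1 : ∫ r in Ioc (0:ℝ) R, F r ≤ ∫ r in Ioc (0:ℝ) R, C1 * r^(1-γ) :=
      setIntegral_mono_on hInt1 hg1int measurableSet_Ioc hB1
    have h2 : ∫ r in Ioc (0:ℝ) R, C1 * r^(1-γ) = C1 * (R^(2-γ)/(2-γ)) := by
      rw [integral_const_mul, ← intervalIntegral.integral_of_le hR.le,
        integral_rpow (Or.inl (by linarith))]
      rw [Real.zero_rpow (by intro hc; rw [show 1-γ+1 = 2-γ by ring] at hc; linarith),
        show 1-γ+1 = 2-γ by ring]
      ring
    have hRγ2 : R^γ * R^(2-γ) = R^2 := by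
      rw [← Real.rpow_natCast R 2, ← Real.rpow_add hR]
      norm_num
    have hbR : b^2 * R^2 = 1 := by
      rw [hRdef]; field_simp
    have h3 : C1 * (R^(2-γ)/(2-γ)) = κ*cL⁻¹/(2*(2-γ)) * ℓ R := by
      rw [hC1]
      have : κ * (b^2/2) * (cL⁻¹ * ℓ R * R^γ) * (R^(2-γ)/(2-γ))
          = κ * cL⁻¹ * ℓ R * (b^2 * (R^γ * R^(2-γ))) / (2*(2-γ)) := by
        have h2γ : (2:ℝ)-γ ≠ 0 := by linarith
        field_simp
      rw [this, hRγ2, hbR]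
      ring
    have h4 : κ*cL⁻¹/(2*(2-γ)) * ℓ R ≤ κ*cL⁻¹/(2*(2-γ)) * (γ * cL⁻¹ * L R) := by
      apply mul_le_mul_of_nonneg_left hℓL
      have h2γ0 : (0:ℝ) < 2-γ := by linarith
      positivity
    calc ∫ r in Ioc (0:ℝ) R, F r ≤ C1 * (R^(2-γ)/(2-γ)) := h1.trans (le_of_eq h2)
      _ = κ*cL⁻¹/(2*(2-γ)) * ℓ R := h3
      _ ≤ κ*cL⁻¹/(2*(2-γ)) * (γ * cL⁻¹ * L R) := h4
      _ = κ*cL⁻¹*γ*cL⁻¹/(2*(2-γ)) * L R := by ring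
  -- bound the second piece
  have hE2 : ∫ r in Ioi R, F r ≤ 2*κ * L R := by
    have h1 : ∫ r in Ioi R, F r ≤ ∫ r in Ioi R, 2*κ*(ℓ r / r) :=
      setIntegral_mono_on hInt2 hg2int measurableSet_Ioi hB2
    have h2 : ∫ r in Ioi R, 2*κ*(ℓ r / r) = 2*κ*L R := by
      rw [MeasureTheory.integral_const_mul, ← hL R hR]
    exact h1.trans (le_of_eq h2)
  rw [hsplit]
  linarith [hE1, hE2]

end AuxStmt16

theorem stmt16 (d : ℕ) (hd : 1 ≤ d) (κ : ℝ) (hκ : 1 ≤ κ)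
    (ℓ : ℝ → ℝ) (cL γ : ℝ)
    (hcL : cL ∈ Set.Ioo (0:ℝ) 1) (hγ : γ ∈ Set.Ioo (0:ℝ) 2)
    (hℓmeas : Measurable ℓ) (hℓpos : ∀ r > 0, 0 < ℓ r)
    (hscale : ∀ r > 0, ∀ lam ≥ (1:ℝ), ℓ (r * lam) ≥ cL * lam ^ (-γ) * ℓ r)
    (L : ℝ → ℝ) (hL : ∀ r > 0, L r = ∫ s in Set.Ioi r, ℓ s / s)
    (hfin : ∀ r > 0, IntegrableOn (fun s => ℓ s / s) (Set.Ioi r))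
    (k : EuclideanSpace ℝ (Fin d) → ℝ)
    (hkmeas : Measurable k)
    (hksym : ∀ h : EuclideanSpace ℝ (Fin d), k (-h) = k h)
    (hk : ∀ h : EuclideanSpace ℝ (Fin d), h ≠ 0 →
      κ⁻¹ * (‖h‖ ^ (-(d : ℝ)) * ℓ ‖h‖) ≤ k h ∧
      k h ≤ κ * (‖h‖ ^ (-(d : ℝ)) * ℓ ‖h‖))
    (ψ : EuclideanSpace ℝ (Fin d) → ℝ)
    (hψ : ∀ ξ, ψ ξ = ∫ h : EuclideanSpace ℝ (Fin d), (1 - Real.cos ⟪ξ, h⟫) * k h) :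
    ∃ c > (0:ℝ), ∀ ξ : EuclideanSpace ℝ (Fin d), ξ ≠ 0 →
      ψ ξ ≤ c * L (1 / ‖ξ‖) := by
  obtain ⟨hcL0, hcL1⟩ := hcL
  obtain ⟨hγ0, hγ2⟩ := hγ
  have hκ0 : (0:ℝ) < κ := lt_of_lt_of_le one_pos hκ
  have h2γ0 : (0:ℝ) < 2 - γ := by linarith
  haveI : Nonempty (Fin d) := ⟨⟨0, hd⟩⟩
  have hfr : Module.finrank ℝ (EuclideanSpace ℝ (Fin d)) = d := finrank_euclideanSpace_fin
  haveI hnt : Nontrivial (EuclideanSpace ℝ (Fin d)) := by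
    apply Module.nontrivial_of_finrank_pos (R := ℝ)
    rw [hfr]; omega
  set vol : ℝ := (volume (Metric.ball (0 : EuclideanSpace ℝ (Fin d)) 1)).toReal with hvol
  have hvolpos : 0 < vol := ENNReal.toReal_pos
    (Metric.measure_ball_pos _ _ one_pos).ne' measure_ball_lt_top.ne
  set C₀ : ℝ := κ*cL⁻¹*γ*cL⁻¹/(2*(2-γ)) + 2*κ with hC₀def
  have hC₀ : 0 < C₀ := by positivity
  refine ⟨d * vol * C₀, by positivity, ?_⟩
  intro ξ hξ
  have hb : 0 < ‖ξ‖ := norm_pos_iff.mpr hξ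
  obtain ⟨hIF, hbound⟩ := radial_aux κ hκ ℓ cL γ ⟨hcL0, hcL1⟩ ⟨hγ0, hγ2⟩ hℓmeas hℓpos
    hscale L hL hfin ‖ξ‖ hb
  set G : ℝ → ℝ := fun r => κ * (min (‖ξ‖^2*r^2/2) 2 * (r ^ (-(d:ℝ)) * ℓ r)) with hG
  have hGmeas : Measurable G := by fun_prop
  have hGF : ∀ r ∈ Ioi (0:ℝ), r ^ (d - 1) * G r
      = κ * (min (‖ξ‖^2*r^2/2) 2 * (ℓ r / r)) := by
    intro r hr
    have hr0 : 0 < r := hr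
    have hrd : r ^ (-(d:ℝ)) = (r ^ d)⁻¹ := by
      rw [Real.rpow_neg hr0.le, Real.rpow_natCast]
    have hpow : r ^ (d-1) * (r^d)⁻¹ = r⁻¹ := by
      have hdd : r ^ d = r ^ (d-1) * r := by
        rw [← pow_succ]; congr 1; omega
      rw [hdd, mul_inv, ← mul_assoc, mul_inv_cancel₀ (pow_ne_zero _ hr0.ne'), one_mul]
    have hdiv : ℓ r / r = r ^ (d-1) * (r^d)⁻¹ * ℓ r := by
      rw [hpow]; field_simp
    simp only [hG]
    rw [hrd, hdiv]
    ring
  have hint' : IntegrableOn (fun r => r ^ (d - 1) * G r) (Ioi 0) :=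
    hIF.congr_fun (fun r hr => (hGF r hr).symm) measurableSet_Ioi
  have hgint : Integrable (fun x : EuclideanSpace ℝ (Fin d) => G ‖x‖) := by
    apply integrable_fun_norm_addHaar' volume hGmeas
    rw [hfr]
    exact hint'
  have hae : ∀ᵐ h : EuclideanSpace ℝ (Fin d), h ≠ 0 := by
    refine ae_iff.mpr ?_
    simp [measure_singleton]
  have hptwise : ∀ h : EuclideanSpace ℝ (Fin d), h ≠ 0 →
      (0 ≤ (1 - Real.cos ⟪ξ, h⟫) * k h ∧ (1 - Real.cos ⟪ξ, h⟫) * k h ≤ G ‖h‖) := by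
    intro h hh
    have hh0 : 0 < ‖h‖ := norm_pos_iff.mpr hh
    obtain ⟨hk1, hk2⟩ := hk h hh
    have hkn : 0 ≤ k h := le_trans (mul_nonneg (inv_nonneg.mpr hκ0.le)
      (mul_nonneg (Real.rpow_nonneg (norm_nonneg h) _) (hℓpos _ hh0).le)) hk1
    have hcos1 : 0 ≤ 1 - Real.cos ⟪ξ, h⟫ := by
      have := Real.cos_le_one ⟪ξ, h⟫; linarith
    have hmin : 1 - Real.cos ⟪ξ, h⟫ ≤ min (‖ξ‖^2*‖h‖^2/2) 2 := by
      refine le_min ?_ ?_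
      · have h1 := Real.one_sub_sq_div_two_le_cos (x := ⟪ξ, h⟫)
        have h2 := abs_real_inner_le_norm ξ h
        nlinarith [sq_abs ⟪ξ, h⟫, abs_nonneg ⟪ξ, h⟫, norm_nonneg h, norm_nonneg ξ]
      · have := Real.neg_one_le_cos ⟪ξ, h⟫; linarith
    have hmin0 : 0 ≤ min (‖ξ‖^2*‖h‖^2/2) 2 := le_min (by positivity) (by norm_num)
    constructor
    · exact mul_nonneg hcos1 hkn
    · calc (1 - Real.cos ⟪ξ, h⟫) * k h
          ≤ min (‖ξ‖^2*‖h‖^2/2) 2 * k h := mul_le_mul_of_nonneg_right hmin hkn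
        _ ≤ min (‖ξ‖^2*‖h‖^2/2) 2 * (κ * (‖h‖ ^ (-(d:ℝ)) * ℓ ‖h‖)) :=
          mul_le_mul_of_nonneg_left hk2 hmin0
        _ = G ‖h‖ := by simp only [hG]; ring
  have key : ψ ξ ≤ ∫ x : EuclideanSpace ℝ (Fin d), G ‖x‖ := by
    rw [hψ ξ]
    refine integral_mono_of_nonneg ?_ hgint ?_
    · exact hae.mono fun h hh => (hptwise h hh).1
    · exact hae.mono fun h hh => (hptwise h hh).2
  have hval : ∫ x : EuclideanSpace ℝ (Fin d), G ‖x‖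
      = d * (vol * ∫ r in Ioi (0:ℝ), r ^ (d-1) * G r) := by
    rw [MeasureTheory.integral_fun_norm_addHaar volume G]
    simp only [hfr, nsmul_eq_mul, smul_eq_mul]
    rfl
  have hval2 : ∫ r in Ioi (0:ℝ), r ^ (d-1) * G r
      = ∫ r in Ioi (0:ℝ), κ * (min (‖ξ‖^2*r^2/2) 2 * (ℓ r / r)) :=
    setIntegral_congr_fun measurableSet_Ioi hGF
  calc ψ ξ ≤ ∫ x : EuclideanSpace ℝ (Fin d), G ‖x‖ := key
    _ = d * (vol * ∫ r in Ioi (0:ℝ), κ * (min (‖ξ‖^2*r^2/2) 2 * (ℓ r / r))) := by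
        rw [hval, hval2]
    _ ≤ d * (vol * (C₀ * L (1/‖ξ‖))) := by
        apply mul_le_mul_of_nonneg_left _ (by positivity)
        exact mul_le_mul_of_nonneg_left hbound hvolpos.le
    _ = d * vol * C₀ * L (1/‖ξ‖) := by ring
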